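/- Let h : ℕ → ℕ be strictly increasing with h(i) ≥ 1, let b ≥ 2 with P_j > b, and let α_j = Σ_{i=0}^j P_i^(-h(i)) have eventually periodic base-b expansion with pre-period s and period ending at position t. Then t − s ≤ t < Π_{i=0}^j P_i^(h(i)) ≤ P_j^((j+1)·h(j)); consequently, among any M(j) = P_j^((j+1)h(j)) consecutive digits of the base-b expansion of α_j (past position 1), at least one digit is nonzero. -/

import Mathlib

/-- `P i` is the `i`-th prime number (`P 0 = 2`). -/
noncomputable def P (i : ℕ) : ℕ := Nat.nth Nat.Prime i

private lemma P_prime (i : ℕ) : (P i).Prime := Nat.prime_nth_prime i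

private lemma P_strictMono : StrictMono P := Nat.nth_strictMono Nat.infinite_setOf_prime

/-- Let `D` be the base-`b` expansion of `α_j = Σ_{i=0}^j P_i^(-h(i))`, where `b < P j`,
and let `(s, t)` describe its eventually periodic structure (pre-period `s`, period
ending at position `t`), with `t` least possible. Then
`t - s ≤ t < Π_{i=0}^j P_i^(h i) ≤ P j ^ ((j+1)·h j) = M j`; consequently any `M j`
consecutive digits (from position `1` on) contain a nonzero digit. -/
theorem no_long_zero_runs
    (h : ℕ → ℕ) (hmono : StrictMono h) (hpos : ∀ i, 1 ≤ h i)
    (j b : ℕ) (hb : 2 ≤ b) (hbj : b < P j)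
    (D : ℕ → ℕ) (hDdigit : ∀ i, D i < b)
    (hD : ∀ n : ℕ, 1 ≤ n →
      (∑ i ∈ Finset.Icc 1 n, (D i : ℚ) * (b : ℚ) ^ (-(i : ℤ))) ≤
          (∑ i ∈ Finset.range (j + 1), (P i : ℚ) ^ (-(h i : ℤ))) ∧
        (∑ i ∈ Finset.range (j + 1), (P i : ℚ) ^ (-(h i : ℤ))) <
          (∑ i ∈ Finset.Icc 1 n, (D i : ℚ) * (b : ℚ) ^ (-(i : ℤ))) + (b : ℚ) ^ (-(n : ℤ)))
    (s t : ℕ) (hst : s < t)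
    (hper : ∀ i, s < i → D (i + (t - s)) = D i)
    (hleast : ∀ s' t', s' < t' → (∀ i, s' < i → D (i + (t' - s')) = D i) → t ≤ t') :
    t - s ≤ t ∧
      t < ∏ i ∈ Finset.range (j + 1), P i ^ h i ∧
      (∏ i ∈ Finset.range (j + 1), P i ^ h i) ≤ P j ^ ((j + 1) * h j) ∧
      ∀ k : ℕ, 1 ≤ k → ∃ i, k ≤ i ∧ i < k + P j ^ ((j + 1) * h j) ∧ D i ≠ 0 := by
  -- notation
  set Q : ℕ := ∏ i ∈ Finset.range (j + 1), P i ^ h i with hQdef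
  set N : ℕ := ∑ i ∈ Finset.range (j + 1),
      ∏ k ∈ (Finset.range (j + 1)).erase i, P k ^ h k with hNdef
  set α : ℚ := ∑ i ∈ Finset.range (j + 1), (P i : ℚ) ^ (-(h i : ℤ)) with hαdef
  have hP2 : ∀ i, 2 ≤ P i := fun i => (P_prime i).two_le
  have hQpos : 0 < Q := Finset.prod_pos fun i _ => pow_pos (by have := hP2 i; omega) _
  have hbQ0 : (b : ℚ) ≠ 0 := by positivity
  have hbQpos : (0 : ℚ) < b := by positivity
  have hb1 : (1 : ℚ) < b := by exact_mod_cast hb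
  have hQQpos : (0 : ℚ) < Q := by exact_mod_cast hQpos
  -- α = N / Q
  have halpha : α = (N : ℚ) / (Q : ℚ) := by
    rw [hαdef, hNdef, Nat.cast_sum, Finset.sum_div]
    refine Finset.sum_congr rfl fun i hi => ?_
    have hQi : (Q : ℚ) = ((P i ^ h i : ℕ) : ℚ) *
        ((∏ k ∈ (Finset.range (j + 1)).erase i, P k ^ h k : ℕ) : ℚ) := by
      norm_cast
      exact (Finset.mul_prod_erase _ _ hi).symm
    have hE : ((∏ k ∈ (Finset.range (j + 1)).erase i, P k ^ h k : ℕ) : ℚ) ≠ 0 := by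
      have : 0 < ∏ k ∈ (Finset.range (j + 1)).erase i, P k ^ h k :=
        Finset.prod_pos fun k _ => pow_pos (by have := hP2 k; omega) _
      exact_mod_cast this.ne'
    rw [hQi, div_mul_eq_div_div_swap, div_self hE, one_div, zpow_neg, zpow_natCast]
    push_cast
    ring_nf
  -- P j ∣ Q
  have hPjpow : P j ∣ P j ^ h j := dvd_pow_self (P j) (by have := hpos j; omega)
  have hPjQ : P j ∣ Q := by
    refine dvd_trans hPjpow ?_
    exact Finset.dvd_prod_of_mem _ (Finset.mem_range.mpr (by omega))
  -- ¬ P j ∣ N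
  have hPjb : ¬ P j ∣ b := by
    intro hd
    have := Nat.le_of_dvd (by omega : 0 < b) hd
    omega
  have hPne : ∀ k, k ≠ j → ¬ P j ∣ P k ^ h k := by
    intro k hk hd
    have h1 : P j ∣ P k := (P_prime j).dvd_of_dvd_pow hd
    have h2 : P j = P k := (Nat.prime_dvd_prime_iff_eq (P_prime j) (P_prime k)).mp h1
    exact hk (P_strictMono.injective h2.symm)
  have hPjN : ¬ P j ∣ N := by
    intro hd
    have hmem : j ∈ Finset.range (j + 1) := Finset.mem_range.mpr (by omega)
    have hsplit : (∏ k ∈ (Finset.range (j + 1)).erase j, P k ^ h k) +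
        ∑ i ∈ (Finset.range (j + 1)).erase j,
          ∏ k ∈ (Finset.range (j + 1)).erase i, P k ^ h k = N :=
      Finset.add_sum_erase _
        (fun i => ∏ k ∈ (Finset.range (j + 1)).erase i, P k ^ h k) hmem
    have hrest : P j ∣ ∑ i ∈ (Finset.range (j + 1)).erase j,
        ∏ k ∈ (Finset.range (j + 1)).erase i, P k ^ h k := by
      refine Finset.dvd_sum fun i hi => ?_
      have hij : i ≠ j := (Finset.mem_erase.mp hi).1
      have hjmem : j ∈ (Finset.range (j + 1)).erase i :=
        Finset.mem_erase.mpr ⟨fun hji => hij hji.symm, hmem⟩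
      exact dvd_trans hPjpow (Finset.dvd_prod_of_mem _ hjmem)
    have hterm : P j ∣ ∏ k ∈ (Finset.range (j + 1)).erase j, P k ^ h k := by
      rw [← hsplit] at hd
      exact (Nat.dvd_add_right hrest).mp (by rwa [Nat.add_comm] at hd)
    obtain ⟨k, hk, hdk⟩ := (P_prime j).prime.exists_mem_finset_dvd hterm
    exact hPne k (Finset.mem_erase.mp hk).1 hdk
  -- P j does not divide any remainder (b^n * N) % Q
  have hfne : ∀ n : ℕ, ¬ P j ∣ (b ^ n * N) % Q := by
    intro n hd
    have e := Nat.div_add_mod (b ^ n * N) Q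
    have h1 : P j ∣ b ^ n * N := by
      rw [← e]
      exact Nat.dvd_add (hPjQ.mul_right _) hd
    rcases (Nat.Prime.dvd_mul (P_prime j)).mp h1 with h2 | h2
    · exact hPjb ((P_prime j).dvd_of_dvd_pow h2)
    · exact hPjN h2
  have hflt : ∀ n : ℕ, (b ^ n * N) % Q < Q := fun n => Nat.mod_lt _ hQpos
  -- the partial sums multiplied by b^n are the naturals c n
  have hc : ∀ n : ℕ, ((∑ i ∈ Finset.Icc 1 n, D i * b ^ (n - i) : ℕ) : ℚ) =
      (b : ℚ) ^ n * ∑ i ∈ Finset.Icc 1 n, (D i : ℚ) * (b : ℚ) ^ (-(i : ℤ)) := by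
    intro n
    rw [Nat.cast_sum, Finset.mul_sum]
    refine Finset.sum_congr rfl fun i hi => ?_
    have hin : i ≤ n := (Finset.mem_Icc.mp hi).2
    have hpow : (b : ℚ) ^ n * (b : ℚ) ^ (-(i : ℤ)) = (b : ℚ) ^ (n - i) := by
      rw [← zpow_natCast (b : ℚ) n, ← zpow_add₀ hbQ0, ← zpow_natCast (b : ℚ) (n - i)]
      congr 1
      omega
    push_cast
    rw [← hpow]
    ring
  -- b^n * α = (b^n * N) / Q as rationals
  have hbnα : ∀ n : ℕ, (b : ℚ) ^ n * α = ((b ^ n * N : ℕ) : ℚ) / (Q : ℚ) := by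
    intro n
    rw [halpha]
    push_cast
    ring
  -- key: floor identification, (b^n N)/Q = c n for n ≥ 1
  have hK : ∀ n : ℕ, 1 ≤ n →
      (b ^ n * N) / Q = ∑ i ∈ Finset.Icc 1 n, D i * b ^ (n - i) := by
    intro n hn
    obtain ⟨hle, hlt⟩ := hD n hn
    have hbn : (0 : ℚ) < (b : ℚ) ^ n := by positivity
    have h1 : ((∑ i ∈ Finset.Icc 1 n, D i * b ^ (n - i) : ℕ) : ℚ) ≤
        ((b ^ n * N : ℕ) : ℚ) / (Q : ℚ) := by
      rw [hc, ← hbnα]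
      exact mul_le_mul_of_nonneg_left hle hbn.le
    have h2 : ((b ^ n * N : ℕ) : ℚ) / (Q : ℚ) <
        ((∑ i ∈ Finset.Icc 1 n, D i * b ^ (n - i) : ℕ) : ℚ) + 1 := by
      rw [hc, ← hbnα]
      have := mul_lt_mul_of_pos_left hlt hbn
      calc (b:ℚ)^n * α < (b:ℚ)^n * ((∑ i ∈ Finset.Icc 1 n, (D i : ℚ) * (b:ℚ) ^ (-(i:ℤ))) +
            (b:ℚ) ^ (-(n:ℤ))) := this
        _ = (b:ℚ)^n * (∑ i ∈ Finset.Icc 1 n, (D i : ℚ) * (b:ℚ) ^ (-(i:ℤ))) +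
            (b:ℚ)^n * (b:ℚ) ^ (-(n:ℤ)) := by ring
        _ = (b:ℚ)^n * (∑ i ∈ Finset.Icc 1 n, (D i : ℚ) * (b:ℚ) ^ (-(i:ℤ))) + 1 := by
            congr 1
            rw [← zpow_natCast (b : ℚ) n, ← zpow_add₀ hbQ0]
            simp
    have h1' : (∑ i ∈ Finset.Icc 1 n, D i * b ^ (n - i)) * Q ≤ b ^ n * N := by
      have h1'' := (le_div_iff₀ hQQpos).mp h1
      exact_mod_cast h1''
    have h2' : b ^ n * N < ((∑ i ∈ Finset.Icc 1 n, D i * b ^ (n - i)) + 1) * Q := by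
      have := (div_lt_iff₀ hQQpos).mp h2
      exact_mod_cast this
    exact Nat.div_eq_of_lt_le h1' h2'
  -- N < Q  (i.e. α < 1)
  have hNQ : N < Q := by
    obtain ⟨hle, hlt⟩ := hD 1 le_rfl
    have hD1 : (D 1 : ℚ) + 1 ≤ (b : ℚ) := by exact_mod_cast hDdigit 1
    have hsum1 : (∑ i ∈ Finset.Icc 1 1, (D i : ℚ) * (b : ℚ) ^ (-(i : ℤ)))
        = (D 1 : ℚ) * (b : ℚ)⁻¹ := by
      rw [Finset.Icc_self, Finset.sum_singleton]
      norm_num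
    have hα1 : α < 1 := by
      rw [hsum1] at hlt
      have hb1' : (b : ℚ) ^ (-(1 : ℕ) : ℤ) = (b : ℚ)⁻¹ := by norm_num
      rw [hb1'] at hlt
      have : (D 1 : ℚ) * (b : ℚ)⁻¹ + (b : ℚ)⁻¹ = ((D 1 : ℚ) + 1) * (b : ℚ)⁻¹ := by ring
      rw [this] at hlt
      have h2 : ((D 1 : ℚ) + 1) * (b : ℚ)⁻¹ ≤ (b : ℚ) * (b : ℚ)⁻¹ :=
        mul_le_mul_of_nonneg_right hD1 (by positivity)
      rw [mul_inv_cancel₀ hbQ0] at h2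
      linarith
    rw [halpha, div_lt_one hQQpos] at hα1
    exact_mod_cast hα1
  -- recursion for c
  have hcrec : ∀ m : ℕ, ∑ i ∈ Finset.Icc 1 (m + 1), D i * b ^ (m + 1 - i)
      = b * (∑ i ∈ Finset.Icc 1 m, D i * b ^ (m - i)) + D (m + 1) := by
    intro m
    rw [Finset.sum_Icc_succ_top (by omega : 1 ≤ m + 1), Finset.mul_sum]
    congr 1
    · refine Finset.sum_congr rfl fun i hi => ?_
      have hin : i ≤ m := (Finset.mem_Icc.mp hi).2
      have : m + 1 - i = (m - i) + 1 := by omega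
      rw [this, pow_succ]
      ring
    · simp
  -- recursion for K = (b^n N)/Q
  have hKrec : ∀ m : ℕ, (b ^ (m + 1) * N) / Q = b * ((b ^ m * N) / Q) + D (m + 1) := by
    intro m
    rcases Nat.eq_zero_or_pos m with rfl | hm
    · have h0 : (b ^ 0 * N) / Q = 0 := by
        simp [Nat.div_eq_of_lt hNQ]
      rw [h0, hK 1 le_rfl]
      simp
    · rw [hK (m + 1) (by omega), hK m hm, hcrec m]
  -- the fundamental digit relation
  have hDf : ∀ m : ℕ, D (m + 1) * Q + (b ^ (m + 1) * N) % Q = b * ((b ^ m * N) % Q) := by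
    intro m
    have e1 := Nat.div_add_mod (b ^ (m + 1) * N) Q
    have e2 := Nat.div_add_mod (b ^ m * N) Q
    rw [hKrec m] at e1
    have e3 : b * (Q * (b ^ m * N / Q)) + (D (m + 1) * Q + b ^ (m + 1) * N % Q)
        = b * (Q * (b ^ m * N / Q)) + b * (b ^ m * N % Q) := by
      calc b * (Q * (b ^ m * N / Q)) + (D (m + 1) * Q + b ^ (m + 1) * N % Q)
          = Q * (b * (b ^ m * N / Q) + D (m + 1)) + b ^ (m + 1) * N % Q := by ring
        _ = b ^ (m + 1) * N := e1
        _ = b * (b ^ m * N) := by ring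
        _ = b * (Q * (b ^ m * N / Q) + b ^ m * N % Q) := by rw [e2]
        _ = b * (Q * (b ^ m * N / Q)) + b * (b ^ m * N % Q) := by ring
    exact Nat.add_left_cancel e3
  have hDval : ∀ m : ℕ, D (m + 1) = (b * ((b ^ m * N) % Q)) / Q := by
    intro m
    rw [← hDf m, mul_comm (D (m + 1)) Q, Nat.mul_add_div hQpos,
      Nat.div_eq_of_lt (hflt (m + 1))]
    omega
  have hfrec : ∀ m : ℕ, (b ^ (m + 1) * N) % Q = (b * ((b ^ m * N) % Q)) % Q := by
    intro m
    rw [← hDf m, mul_comm (D (m + 1)) Q, Nat.mul_add_mod,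
      Nat.mod_eq_of_lt (hflt (m + 1))]
  -- pigeonhole: t < Q
  have key : ∀ x y : ℕ, x < y → y < Q →
      (b ^ x * N) % Q = (b ^ y * N) % Q → t < Q := by
    intro x y hxy hyQ hf
    have hfper : ∀ m, (b ^ (x + m) * N) % Q = (b ^ (y + m) * N) % Q := by
      intro m
      induction m with
      | zero => simpa using hf
      | succ m ih =>
        have ex : x + (m + 1) = (x + m) + 1 := by omega
        have ey : y + (m + 1) = (y + m) + 1 := by omega
        rw [ex, ey, hfrec (x + m), hfrec (y + m), ih]
    have hDp : ∀ i, x < i → D (i + (y - x)) = D i := by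
      intro i hxi
      obtain ⟨m, rfl⟩ : ∃ m, i = x + m + 1 := ⟨i - x - 1, by omega⟩
      have hsh : x + m + 1 + (y - x) = y + m + 1 := by omega
      rw [hsh, hDval (y + m), hDval (x + m), hfper m]
    exact lt_of_le_of_lt (hleast x y hxy hDp) hyQ
  have htQ : t < Q := by
    have hmaps : ∀ n ∈ Finset.range Q,
        (fun n => (b ^ n * N) % Q) n ∈ (Finset.range Q).erase 0 := by
      intro n _
      refine Finset.mem_erase.mpr ⟨?_, Finset.mem_range.mpr (hflt n)⟩
      intro h0
      refine hfne n ?_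
      have h0' : b ^ n * N % Q = 0 := h0
      rw [h0']
      exact dvd_zero _
    have hcard : ((Finset.range Q).erase 0).card < (Finset.range Q).card := by
      rw [Finset.card_erase_of_mem (Finset.mem_range.mpr hQpos), Finset.card_range]
      omega
    obtain ⟨x, hx, y, hy, hxy, hfxy⟩ :=
      Finset.exists_ne_map_eq_of_card_lt_of_maps_to hcard hmaps
    rcases lt_or_gt_of_ne hxy with hlt | hlt
    · exact key x y hlt (Finset.mem_range.mp hy) hfxy
    · exact key y x hlt (Finset.mem_range.mp hx) hfxy.symm
  -- Q ≤ P j ^ ((j+1) * h j)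
  have hQM : Q ≤ P j ^ ((j + 1) * h j) := by
    calc Q ≤ ∏ _i ∈ Finset.range (j + 1), P j ^ h j := by
          refine Finset.prod_le_prod' fun i hi => ?_
          have hij : i ≤ j := by
            have := Finset.mem_range.mp hi; omega
          calc P i ^ h i ≤ P j ^ h i :=
                Nat.pow_le_pow_left (P_strictMono.monotone hij) _
            _ ≤ P j ^ h j :=
                Nat.pow_le_pow_right (by have := hP2 j; omega) (hmono.monotone hij)
      _ = P j ^ ((j + 1) * h j) := by
          rw [Finset.prod_const, Finset.card_range, ← pow_mul, Nat.mul_comm]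
  refine ⟨Nat.sub_le t s, htQ, hQM, ?_⟩
  -- the no-long-zero-runs consequence
  intro k hk
  by_contra hcon
  push_neg at hcon
  have hzero : ∀ i, k ≤ i → i < k + P j ^ ((j + 1) * h j) → D i = 0 := by
    intro i h1 h2
    by_contra hne
    exact hne (hcon i h1 h2)
  set M := P j ^ ((j + 1) * h j) with hM
  have htM : t < M := lt_of_lt_of_le htQ hQM
  set p := t - s with hp
  have hppos : 0 < p := by omega
  set i0 := max s (k - 1) with hi0
  have hi0s : s ≤ i0 := le_max_left _ _
  have hi0k : k - 1 ≤ i0 := le_max_right _ _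
  have hi0c : i0 = s ∨ i0 = k - 1 := max_choice _ _
  have hpM : p < M := by omega
  have hrun : ∀ i, i0 < i → i ≤ i0 + p → D i = 0 := by
    intro i h1 h2
    refine hzero i (by omega) ?_
    rcases hi0c with hc | hc <;> omega
  have hshift : ∀ i, s < i → ∀ m, D (i + m * p) = D i := by
    intro i his m
    induction m with
    | zero => simp
    | succ m ih =>
      have : i + (m + 1) * p = (i + m * p) + (t - s) := by
        rw [← hp]; ring
      rw [this, hper (i + m * p) (by omega), ih]
  have hzlow : ∀ d : ℕ, ∀ i, s < i → i ≤ i0 + p → i0 + p - i ≤ d → D i = 0 := by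
    intro d
    induction d with
    | zero =>
      intro i his h1 h2
      exact hrun i (by omega) h1
    | succ d ih =>
      intro i his h1 h2
      rcases le_or_gt i i0 with hle | hlt
      · rw [← hper i his]
        exact ih (i + (t - s)) (by omega) (by omega) (by omega)
      · exact hrun i hlt h1
  have hzall : ∀ i, s < i → D i = 0 := by
    intro i
    induction i using Nat.strong_induction_on with
    | _ i ih =>
      intro his
      rcases le_or_gt i (i0 + p) with hile | hgt
      · exact hzlow (i0 + p) i his hile (by omega)
      · have h1 : s < i - p := by omega
        have heq : D ((i - p) + (t - s)) = D (i - p) := hper (i - p) h1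
        have heq2 : (i - p) + (t - s) = i := by omega
        rw [heq2] at heq
        rw [heq]
        exact ih (i - p) (by omega) h1
  -- hence the expansion is finite: α = T (s+1), contradiction
  have hTconst : ∀ n, s + 1 ≤ n →
      (∑ i ∈ Finset.Icc 1 n, (D i : ℚ) * (b : ℚ) ^ (-(i : ℤ))) =
      (∑ i ∈ Finset.Icc 1 s, (D i : ℚ) * (b : ℚ) ^ (-(i : ℤ))) := by
    intro n hn
    have h1 : Finset.Icc 1 n = Finset.Ioc 0 n := by
      rw [← Finset.Icc_add_one_left_eq_Ioc]; rfl
    have h2 : Finset.Icc 1 s = Finset.Ioc 0 s := by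
      rw [← Finset.Icc_add_one_left_eq_Ioc]; rfl
    rw [h1, h2, ← Finset.sum_Ioc_consecutive _ (Nat.zero_le s) (by omega : s ≤ n)]
    have : (∑ i ∈ Finset.Ioc s n, (D i : ℚ) * (b : ℚ) ^ (-(i : ℤ))) = 0 := by
      refine Finset.sum_eq_zero fun i hi => ?_
      rw [hzall i (Finset.mem_Ioc.mp hi).1]
      simp
    rw [this, add_zero]
  have halphaT : α = ∑ i ∈ Finset.Icc 1 (s + 1), (D i : ℚ) * (b : ℚ) ^ (-(i : ℤ)) := by
    have hge := (hD (s + 1) (by omega)).1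
    refine le_antisymm ?_ hge
    by_contra hlt
    push_neg at hlt
    set c := α - ∑ i ∈ Finset.Icc 1 (s + 1), (D i : ℚ) * (b : ℚ) ^ (-(i : ℤ)) with hcdef
    have hcpos : 0 < c := by rw [hcdef]; linarith
    obtain ⟨n, hn⟩ := pow_unbounded_of_one_lt (1 / c) hb1
    set n' := max n (s + 1) with hn'
    have hub := (hD n' (by omega)).2
    rw [hTconst n' (le_max_right _ _), ← hTconst (s + 1) le_rfl] at hub
    have hbn' : (b : ℚ) ^ (-(n' : ℤ)) ≤ (b : ℚ) ^ (-(n : ℤ)) := by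
      rw [zpow_neg, zpow_neg, zpow_natCast, zpow_natCast]
      exact inv_anti₀ (by positivity)
        (pow_le_pow_right₀ (by linarith) (le_max_left _ _))
    have hbn : (b : ℚ) ^ (-(n : ℤ)) < c := by
      have hbnp : (0 : ℚ) < (b : ℚ) ^ n := by positivity
      have h1c : (0 : ℚ) < 1 / c := by positivity
      have h2 := inv_strictAnti₀ h1c hn
      rw [one_div, inv_inv] at h2
      rw [zpow_neg, zpow_natCast]
      exact h2
    have hfin : α < (∑ i ∈ Finset.Icc 1 (s + 1), (D i : ℚ) * (b : ℚ) ^ (-(i : ℤ))) + c := by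
      calc α < (∑ i ∈ Finset.Icc 1 (s + 1), (D i : ℚ) * (b : ℚ) ^ (-(i : ℤ)))
            + (b : ℚ) ^ (-(n' : ℤ)) := hub
        _ ≤ _ := by linarith
    rw [hcdef] at hfin
    linarith
  -- conclude: the remainder at s+1 must vanish, contradiction
  have h2 : ((b ^ (s + 1) * N : ℕ) : ℚ) =
      ((∑ i ∈ Finset.Icc 1 (s + 1), D i * b ^ (s + 1 - i) : ℕ) : ℚ) * Q := by
    rw [hc (s + 1), ← halphaT, hbnα (s + 1), div_mul_cancel₀ _ hQQpos.ne']
  have h3 : b ^ (s + 1) * N = (∑ i ∈ Finset.Icc 1 (s + 1), D i * b ^ (s + 1 - i)) * Q := by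
    exact_mod_cast h2
  have h4 : (b ^ (s + 1) * N) % Q = 0 := by
    rw [h3]
    exact Nat.mul_mod_left _ _
  apply hfne (s + 1)
  rw [h4]
  exact dvd_zero _
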